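/- For every ξ > 0 and y ∈ (0,1), ∫₀^ξ G₀(t,y) dt ≥ 0, with strict inequality for y ∈ (0,1); equality in the limit only at y = 1. -/

import Mathlib

open Real MeasureTheory Set Filter Topology

noncomputable def G0aux.Eint (s : ℝ) : ℝ := ∫ u in Set.Ici s, Real.exp (-u^2)

noncomputable def G0aux.psi (x t : ℝ) : ℝ :=
  (1 / (2 * Real.sqrt Real.pi * t ^ ((3:ℝ)/2))) * (x * Real.exp (-x^2 / (4*t)))

namespace G0aux

lemma integrable_gauss : MeasureTheory.Integrable (fun u : ℝ => Real.exp (-u^2)) := by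
  have := integrable_exp_neg_mul_sq (b := (1:ℝ)) one_pos
  simpa using this

lemma integrable_gauss2 : MeasureTheory.Integrable (fun u : ℝ => Real.exp (-u^2/2)) := by
  have := integrable_exp_neg_mul_sq (b := (1/2:ℝ)) (by norm_num)
  refine this.congr (Filter.Eventually.of_forall fun x => ?_)
  ring_nf

lemma cont_gauss : Continuous (fun u : ℝ => Real.exp (-u^2)) := by fun_prop

lemma Eint_nonneg (s : ℝ) : 0 ≤ Eint s :=
  MeasureTheory.setIntegral_nonneg measurableSet_Ici (fun _ _ => (Real.exp_pos _).le)

lemma Eint_le (s : ℝ) (hs : 0 ≤ s) :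
    Eint s ≤ Real.exp (-s^2/2) * Real.sqrt (2*Real.pi) := by
  have key : Eint s ≤ ∫ u in Set.Ici s, Real.exp (-s^2/2) * Real.exp (-u^2/2) := by
    refine MeasureTheory.setIntegral_mono_on (integrable_gauss.integrableOn)
      ((integrable_gauss2.const_mul _).integrableOn) measurableSet_Ici (fun u hu => ?_)
    rw [← Real.exp_add]
    apply Real.exp_le_exp.2
    have hu' : s ≤ u := hu
    nlinarith
  refine key.trans ?_
  rw [MeasureTheory.integral_const_mul]
  have h1 : ∫ u in Set.Ici s, Real.exp (-u^2/2) ≤ ∫ u : ℝ, Real.exp (-u^2/2) :=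
    MeasureTheory.setIntegral_le_integral integrable_gauss2
      (Filter.Eventually.of_forall fun u => (Real.exp_pos _).le)
  have h2 : ∫ u : ℝ, Real.exp (-u^2/2) = Real.sqrt (2*Real.pi) := by
    have := integral_gaussian (1/2 : ℝ)
    have h : (fun u:ℝ => Real.exp (-u^2/2)) = fun u:ℝ => Real.exp (-(1/2)*u^2) := by
      funext u; ring_nf
    rw [h, this, div_div_eq_mul_div, div_one]
    ring_nf
  have hnn : 0 ≤ Real.exp (-s^2/2) := (Real.exp_pos _).le
  calc Real.exp (-s^2/2) * ∫ u in Set.Ici s, Real.exp (-u^2/2)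
      ≤ Real.exp (-s^2/2) * ∫ u : ℝ, Real.exp (-u^2/2) := by
        exact mul_le_mul_of_nonneg_left h1 hnn
  _ = Real.exp (-s^2/2) * Real.sqrt (2*Real.pi) := by rw [h2]

lemma Eint_split {a b : ℝ} (hab : a ≤ b) :
    Eint a = (∫ u in Set.Ico a b, Real.exp (-u^2)) + Eint b := by
  unfold Eint
  have hdisj : Disjoint (Set.Ico a b) (Set.Ici b) := by
    rw [Set.disjoint_left]
    rintro x ⟨_, h2⟩ h3
    exact absurd (Set.mem_Ici.1 h3) (not_le.2 h2)
  rw [← MeasureTheory.setIntegral_union hdisj measurableSet_Ici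
    (integrable_gauss.integrableOn) (integrable_gauss.integrableOn),
    Set.Ico_union_Ici_eq_Ici hab]

lemma Eint_anti {a b : ℝ} (hab : a ≤ b) : Eint b ≤ Eint a := by
  rw [Eint_split hab]
  have : 0 ≤ ∫ u in Set.Ico a b, Real.exp (-u^2) :=
    MeasureTheory.setIntegral_nonneg measurableSet_Ico (fun u _ => (Real.exp_pos _).le)
  linarith

lemma Eint_strict_anti {a b : ℝ} (hab : a < b) : Eint b < Eint a := by
  rw [Eint_split hab.le]
  have : 0 < ∫ u in Set.Ico a b, Real.exp (-u^2) := by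
    rw [MeasureTheory.setIntegral_pos_iff_support_of_nonneg_ae
      (Filter.Eventually.of_forall fun u => (Real.exp_pos _).le) integrable_gauss.integrableOn]
    have : (Function.support fun u : ℝ => Real.exp (-u^2)) = Set.univ := by
      ext u; simp [Function.support, (Real.exp_pos _).ne']
    rw [this, Set.univ_inter, Real.volume_Ico]
    simpa using hab
  linarith

lemma Eint_eq (s : ℝ) (hs : 0 < s) :
    Eint s = (∫ u in Set.Ioi (0:ℝ), Real.exp (-u^2)) - ∫ u in (0:ℝ)..s, Real.exp (-u^2) := by
  have hdisj : Disjoint (Set.Ioc (0:ℝ) s) (Set.Ioi s) := by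
    rw [Set.disjoint_left]
    rintro x ⟨_, h2⟩ h3
    exact absurd (Set.mem_Ioi.1 h3) (not_lt.2 h2)
  have hsplit : (∫ u in Set.Ioi (0:ℝ), Real.exp (-u^2))
      = (∫ u in Set.Ioc (0:ℝ) s, Real.exp (-u^2)) + ∫ u in Set.Ioi s, Real.exp (-u^2) := by
    rw [← MeasureTheory.setIntegral_union hdisj measurableSet_Ioi
      integrable_gauss.integrableOn integrable_gauss.integrableOn,
      Set.Ioc_union_Ioi_eq_Ioi hs.le]
  rw [intervalIntegral.integral_of_le hs.le]
  unfold Eint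
  rw [MeasureTheory.integral_Ici_eq_integral_Ioi]
  linarith

lemma Eint_hasDeriv (s : ℝ) (hs : 0 < s) :
    HasDerivAt Eint (-Real.exp (-s^2)) s := by
  have h1 : HasDerivAt (fun t => (∫ u in Set.Ioi (0:ℝ), Real.exp (-u^2))
      - ∫ u in (0:ℝ)..t, Real.exp (-u^2)) (-Real.exp (-s^2)) s := by
    have := (intervalIntegral.integral_hasDerivAt_right
      (cont_gauss.intervalIntegrable 0 s)
      (cont_gauss.stronglyMeasurable.stronglyMeasurableAtFilter)
      cont_gauss.continuousAt)
    simpa using this.const_sub _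
  refine h1.congr_of_eventuallyEq ?_
  filter_upwards [eventually_gt_nhds hs] with t ht
  exact (Eint_eq t ht)

lemma inner_hasDeriv (x t : ℝ) (ht : 0 < t) :
    HasDerivAt (fun u : ℝ => x / (2 * Real.sqrt u)) (-(x/4) * t ^ (-(3:ℝ)/2)) t := by
  have h1 : HasDerivAt (fun u : ℝ => (x/2) * u ^ (-(1:ℝ)/2))
      ((x/2) * ((-(1:ℝ)/2) * t ^ ((-(1:ℝ)/2) - 1))) t :=
    (Real.hasDerivAt_rpow_const (Or.inl ht.ne')).const_mul _
  have heq : ∀ᶠ u in 𝓝 t, (x/2) * u ^ (-(1:ℝ)/2) = x / (2 * Real.sqrt u) := by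
    filter_upwards [eventually_gt_nhds ht] with u hu
    rw [Real.sqrt_eq_rpow, show ((-1:ℝ)/2) = -(1/2 : ℝ) by ring, Real.rpow_neg hu.le]
    have : u ^ ((1:ℝ)/2) ≠ 0 := by positivity
    field_simp
  have := h1.congr_of_eventuallyEq (heq.mono fun u hu => hu.symm)
  refine this.congr_deriv ?_
  rw [show ((-(1:ℝ)/2) - 1) = -(3:ℝ)/2 by ring]
  ring

lemma F_hasDeriv (x t : ℝ) (hx : 0 < x) (ht : 0 < t) :
    HasDerivAt (fun u : ℝ => (2 / Real.sqrt Real.pi) * Eint (x / (2 * Real.sqrt u)))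
      (psi x t) t := by
  have hst : 0 < x / (2 * Real.sqrt t) := by positivity
  have hcomp := (Eint_hasDeriv _ hst).comp t (inner_hasDeriv x t ht)
  have := hcomp.const_mul (2 / Real.sqrt Real.pi)
  refine this.congr_deriv ?_
  have hsq : (x / (2 * Real.sqrt t))^2 = x^2 / (4*t) := by
    rw [div_pow, mul_pow, Real.sq_sqrt ht.le]
    norm_num
  rw [psi, hsq]
  have h32 : t ^ (-(3:ℝ)/2) = (t ^ ((3:ℝ)/2))⁻¹ := by
    rw [show (-(3:ℝ)/2) = -((3:ℝ)/2) by ring, Real.rpow_neg ht.le]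
  have hπ : Real.sqrt Real.pi ≠ 0 := by positivity
  have hrt : t ^ ((3:ℝ)/2) ≠ 0 := by positivity
  rw [h32]
  field_simp [h32]
  ring

lemma psi_nonneg {x t : ℝ} (hx : 0 ≤ x) (ht : 0 < t) : 0 ≤ psi x t := by
  unfold psi; positivity

lemma psi_continuousOn (x ξ : ℝ) : ContinuousOn (psi x) (Set.Ioc (0:ℝ) ξ) := by
  intro t ht
  have ht0 : 0 < t := ht.1
  apply ContinuousWithinAt.mul
  · apply ContinuousWithinAt.div continuousWithinAt_const
    · exact (ContinuousWithinAt.mul continuousWithinAt_const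
        ((Real.continuousAt_rpow_const t _ (Or.inl ht0.ne')).continuousWithinAt))
    · positivity
  · apply ContinuousWithinAt.mul continuousWithinAt_const
    apply Real.continuous_exp.continuousAt.comp_continuousWithinAt
    apply ContinuousWithinAt.div continuousWithinAt_const
    · exact (continuous_const.mul continuous_id).continuousWithinAt
    · positivity

lemma psi_le {x t : ℝ} (hx : 0 < x) (ht : 0 < t) :
    psi x t ≤ (2 / (Real.sqrt Real.pi * x)) * t ^ (-(1:ℝ)/2) := by
  have hexp : Real.exp (-x^2/(4*t)) ≤ 4*t/x^2 := by
    have h1 : x^2/(4*t) + 1 ≤ Real.exp (x^2/(4*t)) := by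
      have := Real.add_one_le_exp (x^2/(4*t)); linarith
    rw [show -x^2/(4*t) = -(x^2/(4*t)) by ring, Real.exp_neg]
    rw [inv_le_comm₀ (Real.exp_pos _) (by positivity)]
    calc (4*t/x^2)⁻¹ = x^2/(4*t) := by rw [inv_div]
    _ ≤ Real.exp (x^2/(4*t)) := by linarith
  have hπ : 0 < Real.sqrt Real.pi := Real.sqrt_pos.2 Real.pi_pos
  have ht32 : (0:ℝ) < t ^ ((3:ℝ)/2) := Real.rpow_pos_of_pos ht _
  have key : psi x t ≤ (1 / (2 * Real.sqrt Real.pi * t ^ ((3:ℝ)/2))) * (x * (4*t/x^2)) := by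
    unfold psi
    apply mul_le_mul_of_nonneg_left _ (by positivity)
    exact mul_le_mul_of_nonneg_left hexp hx.le
  refine key.trans (le_of_eq ?_)
  have h1 : t ^ (-(1:ℝ)/2) = t / t ^ ((3:ℝ)/2) := by
    rw [eq_div_iff ht32.ne', ← Real.rpow_add ht]
    norm_num
  rw [h1]
  field_simp
  ring

lemma psi_integrableOn {x ξ : ℝ} (hx : 0 < x) (hξ : 0 < ξ) :
    MeasureTheory.IntegrableOn (psi x) (Set.Ioc (0:ℝ) ξ) := by
  have hdom : MeasureTheory.IntegrableOn
      (fun t : ℝ => (2 / (Real.sqrt Real.pi * x)) * t ^ (-(1:ℝ)/2)) (Set.Ioc (0:ℝ) ξ) := by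
    have h := intervalIntegral.intervalIntegrable_rpow' (a := (0:ℝ)) (b := ξ)
      (r := (-(1:ℝ)/2)) (by norm_num)
    rw [intervalIntegrable_iff_integrableOn_Ioc_of_le hξ.le] at h
    exact h.const_mul _
  refine hdom.mono' ((psi_continuousOn x ξ).aestronglyMeasurable measurableSet_Ioc) ?_
  rw [ae_restrict_iff' measurableSet_Ioc]
  filter_upwards with t ht
  rw [Real.norm_of_nonneg (psi_nonneg hx.le ht.1)]
  exact psi_le hx ht.1

set_option maxHeartbeats 1000000 in
lemma tendsto_F_zero {x : ℝ} (hx : 0 < x) :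
    Tendsto (fun u : ℝ => (2 / Real.sqrt Real.pi) * Eint (x / (2 * Real.sqrt u)))
      (𝓝[>] (0:ℝ)) (𝓝 0) := by
  have h1 : Tendsto (fun u : ℝ => x / (2 * Real.sqrt u)) (𝓝[>] (0:ℝ)) atTop := by
    have hs : Tendsto (fun u : ℝ => 2 * Real.sqrt u) (𝓝[>] (0:ℝ)) (𝓝[>] 0) := by
      rw [tendsto_nhdsWithin_iff]
      constructor
      · have : Tendsto (fun u : ℝ => 2 * Real.sqrt u) (𝓝 0) (𝓝 (2 * Real.sqrt 0)) :=
          (continuous_const.mul Real.continuous_sqrt).tendsto 0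
        simpa using this.mono_left nhdsWithin_le_nhds
      · filter_upwards [self_mem_nhdsWithin] with u hu
        have h : (0:ℝ) < u := hu
        exact Set.mem_Ioi.2 (by positivity)
    have hinv : Tendsto (fun u : ℝ => (2 * Real.sqrt u)⁻¹) (𝓝[>] (0:ℝ)) atTop :=
      tendsto_inv_nhdsGT_zero.comp hs
    have := hinv.const_mul_atTop hx
    simpa [div_eq_mul_inv] using this
  have h2 : Tendsto (fun s : ℝ => Real.exp (-s^2/2) * Real.sqrt (2*Real.pi)) atTop (𝓝 0) := by
    have hsq : Tendsto (fun s : ℝ => -s^2/2) atTop atBot := by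
      have : Tendsto (fun s : ℝ => s^2) atTop atTop := tendsto_pow_atTop (by norm_num)
      have h := tendsto_neg_atBot_iff.2 (this.atTop_div_const (by norm_num : (0:ℝ) < 2))
      exact h.congr (fun s => by ring)
    have hexp : Tendsto (fun s : ℝ => Real.exp (-s^2/2)) atTop (𝓝 0) :=
      Real.tendsto_exp_atBot.comp hsq
    have := hexp.mul_const (Real.sqrt (2*Real.pi))
    rwa [zero_mul] at this
  have hEt : Tendsto (fun u : ℝ => Eint (x / (2 * Real.sqrt u))) (𝓝[>] (0:ℝ)) (𝓝 0) := by
    apply squeeze_zero' ?_ ?_ (h2.comp h1)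
    · filter_upwards with u; exact Eint_nonneg _
    · filter_upwards [self_mem_nhdsWithin] with u hu
      have hu' : (0:ℝ) < u := hu
      exact Eint_le _ (by positivity)
  simpa using hEt.const_mul (2 / Real.sqrt Real.pi)

lemma psi_integral_eq {x ξ : ℝ} (hx : 0 < x) (hξ : 0 < ξ) :
    ∫ t in Set.Ioc (0:ℝ) ξ, psi x t
      = (2 / Real.sqrt Real.pi) * Eint (x / (2 * Real.sqrt ξ)) := by
  have hii : IntervalIntegrable (psi x) volume 0 ξ := by
    rw [intervalIntegrable_iff_integrableOn_Ioc_of_le hξ.le]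
    exact psi_integrableOn hx hξ
  have := intervalIntegral.integral_eq_sub_of_hasDerivAt_of_tendsto (f := fun u : ℝ =>
      (2 / Real.sqrt Real.pi) * Eint (x / (2 * Real.sqrt u))) (f' := psi x) hξ
    (fun t ht => F_hasDeriv x t hx ht.1) hii (tendsto_F_zero hx)
    (((F_hasDeriv x ξ hx hξ).continuousAt.continuousWithinAt))
  rw [← intervalIntegral.integral_of_le hξ.le, this, sub_zero]

lemma summable_of_linear_geom {f : ℕ → ℝ} {C D r : ℝ} (hr0 : 0 ≤ r) (hr1 : r < 1)
    (h : ∀ n, |f n| ≤ (C + D * n) * r ^ n) : Summable f := by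
  have hg : Summable (fun n : ℕ => (C + D * n) * r ^ n) := by
    have h1 : Summable (fun n : ℕ => C * r ^ n) :=
      (summable_geometric_of_lt_one hr0 hr1).mul_left C
    have h2 : Summable (fun n : ℕ => D * (n * r ^ n)) := by
      have := summable_pow_mul_geometric_of_norm_lt_one (R := ℝ) 1
        (r := r) (by rwa [Real.norm_of_nonneg hr0])
      simpa using this.mul_left D
    exact (h1.add h2).congr (fun n => by ring)
  exact Summable.of_norm_bounded hg (fun n => by rw [Real.norm_eq_abs]; exact h n)

lemma exp_bound_aux {t : ℝ} (ht : 0 < t) {x : ℝ} (n : ℕ) (hn : 4 * n ≤ x ^ 2) :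
    Real.exp (-x^2/(4*t)) ≤ Real.exp (-(1:ℝ)/t) ^ n := by
  rw [← Real.exp_nat_mul]
  apply Real.exp_le_exp.2
  have h1 : (n:ℝ) * (-1/t) = -(n:ℝ)/t := by ring
  rw [h1, div_le_div_iff₀ (by positivity) ht]
  nlinarith

lemma exp_neg_inv_lt_one {t : ℝ} (ht : 0 < t) : Real.exp (-(1:ℝ)/t) < 1 := by
  rw [Real.exp_lt_one_iff]
  have : (0:ℝ) < 1/t := by positivity
  rw [neg_div]
  linarith

variable {y t : ℝ}

lemma summable_p (hy0 : 0 < y) (hy1 : y < 1) (ht : 0 < t) :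
    Summable (fun n : ℕ => (y + 2*n) * Real.exp (-(y + 2*n)^2/(4*t))) := by
  apply summable_of_linear_geom (C := 1) (D := 2) (Real.exp_nonneg _)
    (exp_neg_inv_lt_one ht)
  intro n
  have hx : (0:ℝ) ≤ y + 2*n := by positivity
  have hb : Real.exp (-(y + 2*n)^2/(4*t)) ≤ Real.exp (-(1:ℝ)/t) ^ n := by
    apply exp_bound_aux ht
    have : (n:ℝ) ≤ (n:ℝ)^2 := by
      rcases Nat.eq_zero_or_pos n with h | h
      · simp [h]
      · have : (1:ℝ) ≤ (n:ℝ) := by exact_mod_cast h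
        nlinarith
    nlinarith
  rw [abs_of_nonneg (by positivity)]
  have : y + 2*n ≤ 1 + 2*n := by linarith
  calc (y + 2*n) * Real.exp (-(y + 2*n)^2/(4*t))
      ≤ (1 + 2*n) * (Real.exp (-(1:ℝ)/t) ^ n) :=
        mul_le_mul this hb (Real.exp_pos _).le (by positivity)
  _ = (1 + 2*n) * Real.exp (-(1:ℝ)/t) ^ n := rfl

lemma summable_q (hy0 : 0 < y) (hy1 : y < 1) (ht : 0 < t) :
    Summable (fun n : ℕ => (2*n + 2 - y) * Real.exp (-(2*n + 2 - y)^2/(4*t))) := by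
  apply summable_of_linear_geom (C := 2) (D := 2) (Real.exp_nonneg _)
    (exp_neg_inv_lt_one ht)
  intro n
  have hx : (0:ℝ) ≤ 2*n + 2 - y := by linarith [Nat.cast_nonneg (α := ℝ) n]
  have hb : Real.exp (-(2*n + 2 - y)^2/(4*t)) ≤ Real.exp (-(1:ℝ)/t) ^ n := by
    apply exp_bound_aux ht
    have h1 : (2*(n:ℝ) + 1) ≤ 2*n + 2 - y := by linarith
    have : (n:ℝ) ≤ (n:ℝ)^2 := by
      rcases Nat.eq_zero_or_pos n with h | h
      · simp [h]
      · have : (1:ℝ) ≤ (n:ℝ) := by exact_mod_cast h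
        nlinarith
    nlinarith
  rw [abs_of_nonneg (by positivity)]
  have h2 : 2*(n:ℝ) + 2 - y ≤ 2 + 2*n := by linarith
  calc (2*n + 2 - y) * Real.exp (-(2*n + 2 - y)^2/(4*t))
      ≤ (2 + 2*n) * (Real.exp (-(1:ℝ)/t) ^ n) :=
        mul_le_mul h2 hb (Real.exp_pos _).le (by positivity)
  _ = (2 + 2*n) * Real.exp (-(1:ℝ)/t) ^ n := rfl

lemma tsum_pairing (hy0 : 0 < y) (hy1 : y < 1) (ht : 0 < t) :
    ∑' n : ℤ, (y + 2 * n) * Real.exp (-(y + 2 * n) ^ 2 / (4 * t))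
      = ∑' n : ℕ, ((y + 2*n) * Real.exp (-(y + 2*n)^2/(4*t))
          - (2*n + 2 - y) * Real.exp (-(2*n + 2 - y)^2/(4*t))) := by
  set p : ℕ → ℝ := fun n => (y + 2*n) * Real.exp (-(y + 2*n)^2/(4*t)) with hp
  set q : ℕ → ℝ := fun n => (2*n + 2 - y) * Real.exp (-(2*n + 2 - y)^2/(4*t)) with hq
  have hps := summable_p hy0 hy1 ht
  have hqs := summable_q hy0 hy1 ht
  have hfe : (fun k : ℤ => (y + 2 * k) * Real.exp (-(y + 2 * k) ^ 2 / (4 * t)))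
      = Int.rec p (fun n => -(q n)) := by
    funext k
    cases k with
    | ofNat n => simp [hp]
    | negSucc n =>
      show (y + 2 * ((Int.negSucc n : ℤ) : ℝ)) * _ = -(q n)
      rw [Int.cast_negSucc]
      push_cast
      have hsq : (y + 2 * (-((n:ℝ) + 1))) ^ 2 = (2*n + 2 - y) ^ 2 := by ring
      rw [hsq, hq]
      ring
  rw [hfe, (hps.hasSum.int_rec hqs.neg.hasSum).tsum_eq, tsum_neg,
    ← sub_eq_add_neg, ← Summable.tsum_sub hps hqs]

end G0aux

open G0aux in
/-- For every `ξ > 0` and `y ∈ (0,1)`, `∫₀^ξ G₀(t,y) dt ≥ 0`, and the inequality is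
strict for `y ∈ (0,1)` (equality occurring only in the limiting case `y = 1`). -/
theorem G0_integral_pos
    (G₀ : ℝ → ℝ → ℝ)
    (hG₀ : ∀ t y : ℝ, 0 < t → G₀ t y =
      (1 / (2 * Real.sqrt Real.pi * t ^ ((3:ℝ)/2))) *
        ∑' n : ℤ, (y + 2 * n) * Real.exp (-(y + 2 * n) ^ 2 / (4 * t)))
    (ξ : ℝ) (hξ : 0 < ξ) (y : ℝ) (hy : y ∈ Set.Ioo (0:ℝ) 1) :
    0 < ∫ t in (0:ℝ)..ξ, G₀ t y := by
  obtain ⟨hy0, hy1⟩ := hy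
  set a : ℕ → ℝ := fun n => y + 2*n with ha
  set b : ℕ → ℝ := fun n => 2*n + 2 - y with hb
  have hapos : ∀ n, 0 < a n := fun n => by
    simp only [ha]; positivity
  have hbpos : ∀ n, 0 < b n := fun n => by
    simp only [hb]; have := Nat.cast_nonneg (α := ℝ) n; linarith
  have hab : ∀ n, a n < b n := fun n => by
    simp only [ha, hb]; linarith
  set H : ℕ → ℝ → ℝ := fun n t => psi (a n) t - psi (b n) t with hH
  -- pointwise identity on Ioc 0 ξ
  have hpoint : ∀ t ∈ Set.Ioc (0:ℝ) ξ, G₀ t y = ∑' n : ℕ, H n t := by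
    intro t ht
    have ht0 : 0 < t := ht.1
    rw [hG₀ t y ht0, tsum_pairing hy0 hy1 ht0, ← tsum_mul_left]
    apply tsum_congr
    intro n
    simp only [hH, ha, hb, G0aux.psi]
    ring
  -- integrability of each H n
  have hint : ∀ n, MeasureTheory.Integrable (H n) (volume.restrict (Set.Ioc (0:ℝ) ξ)) :=
    fun n => (psi_integrableOn (hapos n) hξ).sub (psi_integrableOn (hbpos n) hξ)
  -- summability of the integral norms
  have hr0 : (0:ℝ) ≤ Real.exp (-(1:ℝ)/(2*ξ)) := (Real.exp_pos _).le
  have hr1 : Real.exp (-(1:ℝ)/(2*ξ)) < 1 := exp_neg_inv_lt_one (by positivity)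
  have hnormbound : ∀ n, (∫ t in Set.Ioc (0:ℝ) ξ, ‖H n t‖)
      ≤ (4 / Real.sqrt Real.pi * Real.sqrt (2*Real.pi)) * Real.exp (-(1:ℝ)/(2*ξ)) ^ n := by
    intro n
    have h1 : (∫ t in Set.Ioc (0:ℝ) ξ, ‖H n t‖)
        ≤ ∫ t in Set.Ioc (0:ℝ) ξ, (psi (a n) t + psi (b n) t) := by
      refine MeasureTheory.setIntegral_mono_on (hint n).norm
        ((psi_integrableOn (hapos n) hξ).add (psi_integrableOn (hbpos n) hξ))
        measurableSet_Ioc (fun t ht => ?_)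
      have h2 := psi_nonneg (hapos n).le ht.1
      have h3 := psi_nonneg (hbpos n).le ht.1
      simp only [hH, Real.norm_eq_abs]
      rw [abs_sub_le_iff]
      constructor <;> linarith
    rw [MeasureTheory.integral_add (psi_integrableOn (hapos n) hξ)
      (psi_integrableOn (hbpos n) hξ), psi_integral_eq (hapos n) hξ,
      psi_integral_eq (hbpos n) hξ] at h1
    have hπ : 0 < Real.sqrt Real.pi := Real.sqrt_pos.2 Real.pi_pos
    have hsξ : 0 < Real.sqrt ξ := Real.sqrt_pos.2 hξ
    have hmono : Eint (b n / (2*Real.sqrt ξ)) ≤ Eint (a n / (2*Real.sqrt ξ)) := by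
      apply Eint_anti
      gcongr
      exact (hab n).le
    have hEa : Eint (a n / (2*Real.sqrt ξ)) ≤ Real.sqrt (2*Real.pi)
        * Real.exp (-(1:ℝ)/(2*ξ)) ^ n := by
      have hsa : 0 ≤ a n / (2*Real.sqrt ξ) := by positivity
      refine (Eint_le _ hsa).trans ?_
      rw [mul_comm]
      apply mul_le_mul_of_nonneg_left _ (Real.sqrt_nonneg _)
      have hsq : (a n / (2*Real.sqrt ξ))^2 = (a n)^2 / (4*ξ) := by
        rw [div_pow, mul_pow, Real.sq_sqrt hξ.le]; norm_num
      have : Real.exp (-(a n / (2*Real.sqrt ξ))^2/2) = Real.exp (-(a n)^2/(4*(2*ξ))) := by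
        rw [hsq]; ring_nf
      rw [this]
      apply exp_bound_aux (by positivity)
      have hcast : (n:ℝ) ≤ (n:ℝ)^2 := by
        rcases Nat.eq_zero_or_pos n with h | h
        · simp [h]
        · have : (1:ℝ) ≤ (n:ℝ) := by exact_mod_cast h
          nlinarith
      have : a n = y + 2*n := rfl
      nlinarith [hy0]
    calc (∫ t in Set.Ioc (0:ℝ) ξ, ‖H n t‖)
        ≤ 2 / Real.sqrt Real.pi * Eint (a n / (2 * Real.sqrt ξ))
          + 2 / Real.sqrt Real.pi * Eint (b n / (2 * Real.sqrt ξ)) := h1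
      _ ≤ 2 / Real.sqrt Real.pi * Eint (a n / (2 * Real.sqrt ξ))
          + 2 / Real.sqrt Real.pi * Eint (a n / (2 * Real.sqrt ξ)) := by
            have : 0 ≤ 2 / Real.sqrt Real.pi := by positivity
            nlinarith
      _ = 4 / Real.sqrt Real.pi * Eint (a n / (2 * Real.sqrt ξ)) := by ring
      _ ≤ 4 / Real.sqrt Real.pi * (Real.sqrt (2*Real.pi) * Real.exp (-(1:ℝ)/(2*ξ)) ^ n) := by
            apply mul_le_mul_of_nonneg_left hEa (by positivity)
      _ = (4 / Real.sqrt Real.pi * Real.sqrt (2*Real.pi)) * Real.exp (-(1:ℝ)/(2*ξ)) ^ n := by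
            ring
  have hnorms : Summable (fun n => ∫ t in Set.Ioc (0:ℝ) ξ, ‖H n t‖) := by
    apply summable_of_linear_geom (C := 4 / Real.sqrt Real.pi * Real.sqrt (2*Real.pi))
      (D := 0) hr0 hr1
    intro n
    have hge : 0 ≤ ∫ t in Set.Ioc (0:ℝ) ξ, ‖H n t‖ :=
      MeasureTheory.integral_nonneg (fun t => norm_nonneg _)
    rw [abs_of_nonneg hge]
    have := hnormbound n
    calc (∫ t in Set.Ioc (0:ℝ) ξ, ‖H n t‖)
        ≤ (4 / Real.sqrt Real.pi * Real.sqrt (2*Real.pi)) * Real.exp (-(1:ℝ)/(2*ξ)) ^ n := this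
      _ = (4 / Real.sqrt Real.pi * Real.sqrt (2*Real.pi) + 0 * n)
            * Real.exp (-(1:ℝ)/(2*ξ)) ^ n := by ring
  -- Fubini
  have hfub := MeasureTheory.hasSum_integral_of_summable_integral_norm
    (μ := volume.restrict (Set.Ioc (0:ℝ) ξ)) (F := H) hint hnorms
  -- each term value and positivity
  have hterm : ∀ n, (∫ t in Set.Ioc (0:ℝ) ξ, H n t)
      = 2 / Real.sqrt Real.pi
        * (Eint (a n / (2*Real.sqrt ξ)) - Eint (b n / (2*Real.sqrt ξ))) := by
    intro n
    simp only [hH]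
    rw [MeasureTheory.integral_sub (psi_integrableOn (hapos n) hξ)
      (psi_integrableOn (hbpos n) hξ), psi_integral_eq (hapos n) hξ,
      psi_integral_eq (hbpos n) hξ]
    ring
  have habq : ∀ n, a n / (2*Real.sqrt ξ) < b n / (2*Real.sqrt ξ) := by
    intro n
    have hsξ : 0 < Real.sqrt ξ := Real.sqrt_pos.2 hξ
    gcongr
    exact hab n
  have hpos : ∀ n, 0 ≤ ∫ t in Set.Ioc (0:ℝ) ξ, H n t := by
    intro n
    rw [hterm n]
    have := Eint_anti (habq n).le
    have hπ : 0 < Real.sqrt Real.pi := Real.sqrt_pos.2 Real.pi_pos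
    have h2 : (0:ℝ) ≤ 2 / Real.sqrt Real.pi := by positivity
    nlinarith
  have hpos0 : 0 < ∫ t in Set.Ioc (0:ℝ) ξ, H 0 t := by
    rw [hterm 0]
    have := Eint_strict_anti (habq 0)
    have hπ : 0 < Real.sqrt Real.pi := Real.sqrt_pos.2 Real.pi_pos
    have h2 : (0:ℝ) < 2 / Real.sqrt Real.pi := by positivity
    nlinarith
  have hsum_pos : 0 < ∑' n : ℕ, ∫ t in Set.Ioc (0:ℝ) ξ, H n t :=
    Summable.tsum_pos ⟨_, hfub⟩ hpos 0 hpos0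
  rw [hfub.tsum_eq] at hsum_pos
  rw [intervalIntegral.integral_of_le hξ.le]
  calc (0:ℝ) < ∫ t in Set.Ioc (0:ℝ) ξ, ∑' n : ℕ, H n t := hsum_pos
    _ = ∫ t in Set.Ioc (0:ℝ) ξ, G₀ t y :=
      (MeasureTheory.setIntegral_congr_fun measurableSet_Ioc (fun t ht => (hpoint t ht).symm)).symm
        |>.symm ▸ rfl
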